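/- Scalar autonomous ODE lemma (Lemma 3.1): Let a < b be real numbers, B : ℝ → ℝ be continuously differentiable on [a,b] with B(a) = B(b) = 0 and B(x) > 0 for all x ∈ (a,b), and let f₀ ∈ (a,b). Then there exists a unique C¹ function f : ℝ → [a,b] satisfying f'(z) = B(f(z)) for all z ∈ ℝ and f(0) = f₀. Moreover, this f is strictly increasing, f(z) → a as z → −∞, and f(z) → b as z → +∞. -/

import Mathlib

open Real Filter Topology

/-- Scalar autonomous ODE lemma: for `B` which is `C¹` on `[a, b]`, vanishes at the
endpoints and is positive inside, there is a unique `C¹` solution of `f' = B ∘ f`,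
`f 0 = f₀`, taking values in `[a, b]`; it is strictly increasing and connects `a` to `b`. -/
theorem scalar_autonomous_ode_lemma
    (a b : ℝ) (hab : a < b) (B : ℝ → ℝ)
    (hB : ContDiffOn ℝ 1 B (Set.Icc a b))
    (hBa : B a = 0) (hBb : B b = 0)
    (hBpos : ∀ x ∈ Set.Ioo a b, 0 < B x)
    (f₀ : ℝ) (hf₀ : f₀ ∈ Set.Ioo a b) :
    ∃ f : ℝ → ℝ,
      ((∀ z, f z ∈ Set.Icc a b) ∧ ContDiff ℝ 1 f ∧
        (∀ z, HasDerivAt f (B (f z)) z) ∧ f 0 = f₀) ∧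
      StrictMono f ∧
      Tendsto f atBot (𝓝 a) ∧ Tendsto f atTop (𝓝 b) ∧
      ∀ g : ℝ → ℝ, (∀ z, g z ∈ Set.Icc a b) → ContDiff ℝ 1 g →
        (∀ z, HasDerivAt g (B (g z)) z) → g 0 = f₀ → g = f := by
  classical
  -- Lipschitz constant for B on [a,b]
  obtain ⟨C0, hC0⟩ := isCompact_Icc.exists_bound_of_continuousOn
    (hB.continuousOn_derivWithin (uniqueDiffOn_Icc hab) le_rfl)
  set K : NNReal := ⟨max C0 0 + 1, by positivity⟩ with hKdef
  have hKpos : (0:ℝ) < (K:ℝ) := by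
    have : (K:ℝ) = max C0 0 + 1 := rfl
    rw [this]; positivity
  have hL : LipschitzOnWith K B (Set.Icc a b) := by
    apply (convex_Icc a b).lipschitzOnWith_of_nnnorm_derivWithin_le
      (hB.differentiableOn one_ne_zero)
    intro x hx
    rw [← NNReal.coe_le_coe, coe_nnnorm]
    have : (K:ℝ) = max C0 0 + 1 := rfl
    rw [this]
    have := hC0 x hx
    have h2 : C0 ≤ max C0 0 := le_max_left _ _
    linarith
  -- bounds B x ≤ K (b - x) and B x ≤ K (x - a)
  have hBle_b : ∀ x ∈ Set.Icc a b, B x ≤ (K:ℝ) * (b - x) := by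
    intro x hx
    have := hL.dist_le_mul x hx b (Set.right_mem_Icc.2 hab.le)
    rw [hBb, Real.dist_eq, Real.dist_eq, sub_zero] at this
    have h1 : |x - b| = b - x := by rw [abs_sub_comm, abs_of_nonneg (by linarith [hx.2])]
    rw [h1] at this
    exact (le_abs_self _).trans this
  have hBle_a : ∀ x ∈ Set.Icc a b, B x ≤ (K:ℝ) * (x - a) := by
    intro x hx
    have := hL.dist_le_mul x hx a (Set.left_mem_Icc.2 hab.le)
    rw [hBa, Real.dist_eq, Real.dist_eq, sub_zero] at this
    have h1 : |x - a| = x - a := abs_of_nonneg (by linarith [hx.1])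
    rw [h1] at this
    exact (le_abs_self _).trans this
  have hBne : ∀ x ∈ Set.Ioo a b, B x ≠ 0 := fun x hx => (hBpos x hx).ne'
  have hcont_inv : ContinuousOn (fun t => (B t)⁻¹) (Set.Ioo a b) :=
    ((hB.continuousOn).mono Set.Ioo_subset_Icc_self).inv₀ hBne
  have hordIoo : Set.OrdConnected (Set.Ioo a b) := Set.ordConnected_Ioo
  have hInt : ∀ x ∈ Set.Ioo a b, ∀ y ∈ Set.Ioo a b,
      IntervalIntegrable (fun t => (B t)⁻¹) MeasureTheory.volume x y := by
    intro x hx y hy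
    exact (hcont_inv.mono (hordIoo.uIcc_subset hx hy)).intervalIntegrable
  set F : ℝ → ℝ := fun x => ∫ t in f₀..x, (B t)⁻¹ with hFdef
  have hFderiv : ∀ x ∈ Set.Ioo a b, HasDerivAt F (B x)⁻¹ x := by
    intro x hx
    exact intervalIntegral.integral_hasDerivAt_right (hInt f₀ hf₀ x hx)
      (hcont_inv.stronglyMeasurableAtFilter isOpen_Ioo x hx)
      (hcont_inv.continuousAt (Ioo_mem_nhds hx.1 hx.2))
  have hFcont : ContinuousOn F (Set.Ioo a b) := fun x hx =>
    (hFderiv x hx).continuousAt.continuousWithinAt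
  have hFmono : StrictMonoOn F (Set.Ioo a b) := by
    apply strictMonoOn_of_deriv_pos (convex_Ioo a b) hFcont
    intro x hx
    rw [interior_Ioo] at hx
    rw [(hFderiv x hx).deriv]
    exact inv_pos.2 (hBpos x hx)
  -- comparison near b
  have key_b : ∀ x ∈ Set.Ico f₀ b,
      (K:ℝ)⁻¹ * (Real.log (b - f₀) - Real.log (b - x)) ≤ F x := by
    intro x hx
    have hx' : x ∈ Set.Ioo a b := ⟨lt_of_lt_of_le hf₀.1 hx.1, hx.2⟩
    have hsub : Set.uIcc f₀ x ⊆ Set.Ioo a b := hordIoo.uIcc_subset hf₀ hx'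
    have hG : ∀ t ∈ Set.uIcc f₀ x,
        HasDerivAt (fun t => -(K:ℝ)⁻¹ * Real.log (b - t)) ((K:ℝ)⁻¹ * (b - t)⁻¹) t := by
      intro t ht
      have hbt : 0 < b - t := sub_pos.2 (hsub ht).2
      have h1 : HasDerivAt (fun t : ℝ => b - t) (-1) t := (hasDerivAt_id t).const_sub b
      have h2 := (Real.hasDerivAt_log hbt.ne').comp t h1
      have h3 := h2.const_mul (-(K:ℝ)⁻¹)
      refine h3.congr_deriv ?_
      ring
    have hintc : IntervalIntegrable (fun t => (K:ℝ)⁻¹ * (b - t)⁻¹) MeasureTheory.volume f₀ x := by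
      apply ContinuousOn.intervalIntegrable
      apply ContinuousOn.mul continuousOn_const
      apply ContinuousOn.inv₀ (continuousOn_const.sub continuousOn_id)
      intro t ht
      exact (sub_pos.2 (hsub ht).2).ne'
    have hcomp := intervalIntegral.integral_eq_sub_of_hasDerivAt hG hintc
    have hmono := intervalIntegral.integral_mono_on hx.1 hintc (hInt f₀ hf₀ x hx') ?_
    · calc (K:ℝ)⁻¹ * (Real.log (b - f₀) - Real.log (b - x))
          = -(K:ℝ)⁻¹ * Real.log (b - x) - -(K:ℝ)⁻¹ * Real.log (b - f₀) := by ring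
        _ = ∫ t in f₀..x, (K:ℝ)⁻¹ * (b - t)⁻¹ := hcomp.symm
        _ ≤ F x := hmono
    · intro t ht
      have ht' : t ∈ Set.Ioo a b := hsub (by rw [Set.uIcc_of_le hx.1]; exact ht)
      have h1 : 0 < B t := hBpos t ht'
      have h2 : B t ≤ (K:ℝ) * (b - t) := hBle_b t (Set.Ioo_subset_Icc_self ht')
      calc (K:ℝ)⁻¹ * (b - t)⁻¹ = ((K:ℝ) * (b - t))⁻¹ := by rw [mul_inv]
        _ ≤ (B t)⁻¹ := by
            apply inv_anti₀ h1 h2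
  -- comparison near a
  have key_a : ∀ x ∈ Set.Ioc a f₀,
      F x ≤ (K:ℝ)⁻¹ * (Real.log (x - a) - Real.log (f₀ - a)) := by
    intro x hx
    have hx' : x ∈ Set.Ioo a b := ⟨hx.1, lt_of_le_of_lt hx.2 hf₀.2⟩
    have hsub : Set.uIcc x f₀ ⊆ Set.Ioo a b := hordIoo.uIcc_subset hx' hf₀
    have hG : ∀ t ∈ Set.uIcc x f₀,
        HasDerivAt (fun t => (K:ℝ)⁻¹ * Real.log (t - a)) ((K:ℝ)⁻¹ * (t - a)⁻¹) t := by
      intro t ht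
      have hta : 0 < t - a := sub_pos.2 (hsub ht).1
      have h1 : HasDerivAt (fun t : ℝ => t - a) 1 t := (hasDerivAt_id t).sub_const a
      have h2 := (Real.hasDerivAt_log hta.ne').comp t h1
      have h3 := h2.const_mul ((K:ℝ)⁻¹)
      refine h3.congr_deriv ?_
      simp [Function.comp]
    have hintc : IntervalIntegrable (fun t => (K:ℝ)⁻¹ * (t - a)⁻¹) MeasureTheory.volume x f₀ := by
      apply ContinuousOn.intervalIntegrable
      apply ContinuousOn.mul continuousOn_const
      apply ContinuousOn.inv₀ (continuousOn_id.sub continuousOn_const)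
      intro t ht
      exact (sub_pos.2 (hsub ht).1).ne'
    have hcomp := intervalIntegral.integral_eq_sub_of_hasDerivAt hG hintc
    have hmono := intervalIntegral.integral_mono_on hx.2 hintc (hInt x hx' f₀ hf₀) ?_
    · have hFx : F x = -(∫ t in x..f₀, (B t)⁻¹) := by
        rw [hFdef]; simp [intervalIntegral.integral_symm f₀ x]
      rw [hFx]
      have : (K:ℝ)⁻¹ * (Real.log (f₀ - a) - Real.log (x - a))
          ≤ ∫ t in x..f₀, (B t)⁻¹ := by
        calc (K:ℝ)⁻¹ * (Real.log (f₀ - a) - Real.log (x - a))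
            = (K:ℝ)⁻¹ * Real.log (f₀ - a) - (K:ℝ)⁻¹ * Real.log (x - a) := by ring
          _ = ∫ t in x..f₀, (K:ℝ)⁻¹ * (t - a)⁻¹ := hcomp.symm
          _ ≤ _ := hmono
      linarith
    · intro t ht
      have ht' : t ∈ Set.Ioo a b := hsub (by rw [Set.uIcc_of_le hx.2]; exact ht)
      have h1 : 0 < B t := hBpos t ht'
      have h2 : B t ≤ (K:ℝ) * (t - a) := hBle_a t (Set.Ioo_subset_Icc_self ht')
      calc (K:ℝ)⁻¹ * (t - a)⁻¹ = ((K:ℝ) * (t - a))⁻¹ := by rw [mul_inv]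
        _ ≤ (B t)⁻¹ := by
            apply inv_anti₀ h1 h2
  -- limits of F at the endpoints
  have tend_b : Tendsto F (𝓝[<] b) atTop := by
    have h1 : Tendsto (fun x => b - x) (𝓝[<] b) (𝓝[>] (0:ℝ)) := by
      rw [tendsto_nhdsWithin_iff]
      constructor
      · have : Tendsto (fun x => b - x) (𝓝 b) (𝓝 (b - b)) :=
          (continuous_const.sub continuous_id).tendsto b
        rw [sub_self] at this
        exact this.mono_left nhdsWithin_le_nhds
      · filter_upwards [self_mem_nhdsWithin] with x hx
        exact sub_pos.2 (Set.mem_Iio.1 hx)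
    have h2 : Tendsto (fun x => Real.log (b - x)) (𝓝[<] b) atBot :=
      Real.tendsto_log_nhdsGT_zero.comp h1
    have h3 : Tendsto (fun x => (K:ℝ)⁻¹ * (Real.log (b - f₀) - Real.log (b - x)))
        (𝓝[<] b) atTop := by
      apply Tendsto.const_mul_atTop (inv_pos.2 hKpos)
      apply tendsto_atTop_add_const_left
      exact tendsto_neg_atBot_atTop.comp h2
    apply tendsto_atTop_mono' _ _ h3
    filter_upwards [Ico_mem_nhdsLT_of_mem (Set.mem_Ioc.2 ⟨hf₀.2, le_rfl⟩)] with x hx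
    exact key_b x hx
  have tend_a : Tendsto F (𝓝[>] a) atBot := by
    have h1 : Tendsto (fun x => x - a) (𝓝[>] a) (𝓝[>] (0:ℝ)) := by
      rw [tendsto_nhdsWithin_iff]
      constructor
      · have : Tendsto (fun x => x - a) (𝓝 a) (𝓝 (a - a)) :=
          (continuous_id.sub continuous_const).tendsto a
        rw [sub_self] at this
        exact this.mono_left nhdsWithin_le_nhds
      · filter_upwards [self_mem_nhdsWithin] with x hx
        exact sub_pos.2 (Set.mem_Ioi.1 hx)
    have h2 : Tendsto (fun x => Real.log (x - a)) (𝓝[>] a) atBot :=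
      Real.tendsto_log_nhdsGT_zero.comp h1
    have h3 : Tendsto (fun x => (K:ℝ)⁻¹ * (Real.log (x - a) - Real.log (f₀ - a)))
        (𝓝[>] a) atBot := by
      apply Tendsto.const_mul_atBot (inv_pos.2 hKpos)
      apply tendsto_atBot_add_const_right
      exact h2
    apply tendsto_atBot_mono' _ _ h3
    filter_upwards [Ioc_mem_nhdsGT_of_mem (Set.mem_Ico.2 ⟨le_rfl, hf₀.1⟩)] with x hx
    exact key_a x hx
  -- surjectivity of F : Ioo a b → ℝ
  have hsurjF : ∀ z : ℝ, ∃ x ∈ Set.Ioo a b, F x = z := by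
    intro z
    obtain ⟨x₂, hzx₂, hx₂⟩ :=
      ((tend_b.eventually_ge_atTop z).and
        (Ioo_mem_nhdsLT_of_mem (Set.mem_Ioc.2 ⟨hab, le_rfl⟩))).exists
    obtain ⟨x₁, hzx₁, hx₁⟩ :=
      ((tend_a.eventually_le_atBot z).and
        (Ioo_mem_nhdsGT_of_mem (Set.mem_Ico.2 ⟨le_rfl, hab⟩))).exists
    have hsub : Set.uIcc x₁ x₂ ⊆ Set.Ioo a b := hordIoo.uIcc_subset hx₁ hx₂
    have hz : z ∈ Set.uIcc (F x₁) (F x₂) := Set.mem_uIcc.2 (Or.inl ⟨hzx₁, hzx₂⟩)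
    obtain ⟨x, hx, hFx⟩ := intermediate_value_uIcc (hFcont.mono hsub) hz
    exact ⟨x, hsub hx, hFx⟩
  -- the order isomorphism and the solution f
  set Ft : Set.Ioo a b → ℝ := fun x => F x with hFtdef
  have hFtmono : StrictMono Ft := fun x y hxy => hFmono x.2 y.2 hxy
  have hFtsurj : Function.Surjective Ft := by
    intro z
    obtain ⟨x, hx, h⟩ := hsurjF z
    exact ⟨⟨x, hx⟩, h⟩
  set e := StrictMono.orderIsoOfSurjective Ft hFtmono hFtsurj with hedef
  set f : ℝ → ℝ := fun z => ((e.symm z : Set.Ioo a b) : ℝ) with hfdef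
  have hmem : ∀ z, f z ∈ Set.Ioo a b := fun z => (e.symm z).2
  have hleft : ∀ z, F (f z) = z := fun z =>
    StrictMono.orderIsoOfSurjective_self_symm_apply Ft hFtmono hFtsurj z
  have hfmono : StrictMono f := fun x y h => e.symm.strictMono h
  have hf0 : f 0 = f₀ := by
    have h0 : Ft ⟨f₀, hf₀⟩ = 0 := by
      show F f₀ = 0
      rw [hFdef]
      exact intervalIntegral.integral_same
    have := StrictMono.orderIsoOfSurjective_symm_apply_self Ft hFtmono hFtsurj ⟨f₀, hf₀⟩
    rw [h0] at this
    show ((e.symm 0 : Set.Ioo a b) : ℝ) = f₀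
    rw [this]
  have hfcont : Continuous f :=
    continuous_subtype_val.comp (e.symm.toHomeomorph.continuous)
  have hfderiv : ∀ z, HasDerivAt f (B (f z)) z := by
    intro z
    have h1 : HasDerivAt F (B (f z))⁻¹ (f z) := hFderiv _ (hmem z)
    have h2 : (B (f z))⁻¹ ≠ 0 := inv_ne_zero (hBpos _ (hmem z)).ne'
    have h3 : ∀ᶠ y in 𝓝 z, F (f y) = y := Eventually.of_forall hleft
    have := HasDerivAt.of_local_left_inverse hfcont.continuousAt h1 h2 h3
    rwa [inv_inv] at this
  have hfC1 : ContDiff ℝ 1 f := by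
    rw [contDiff_one_iff_deriv]
    refine ⟨fun z => (hfderiv z).differentiableAt, ?_⟩
    have hde : deriv f = fun z => B (f z) := funext fun z => (hfderiv z).deriv
    rw [hde]
    exact hB.continuousOn.comp_continuous hfcont
      (fun z => Set.Ioo_subset_Icc_self (hmem z))
  have hrange : Set.range f = Set.Ioo a b := by
    apply Set.Subset.antisymm
    · rintro x ⟨z, rfl⟩
      exact hmem z
    · intro x hx
      refine ⟨F x, ?_⟩
      have := StrictMono.orderIsoOfSurjective_symm_apply_self Ft hFtmono hFtsurj ⟨x, hx⟩
      show ((e.symm (F x) : Set.Ioo a b) : ℝ) = x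
      rw [show F x = Ft ⟨x, hx⟩ from rfl, this]
  have tendf_bot : Tendsto f atBot (𝓝 a) := by
    have hbdd : BddBelow (Set.range f) := ⟨a, by rintro y ⟨z, rfl⟩; exact (hmem z).1.le⟩
    have h1 := tendsto_atBot_ciInf hfmono.monotone hbdd
    have h2 : (⨅ z, f z) = a := by
      rw [iInf, hrange, csInf_Ioo hab]
    rwa [h2] at h1
  have tendf_top : Tendsto f atTop (𝓝 b) := by
    have hbdd : BddAbove (Set.range f) := ⟨b, by rintro y ⟨z, rfl⟩; exact (hmem z).2.le⟩
    have h1 := tendsto_atTop_ciSup hfmono.monotone hbdd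
    have h2 : (⨆ z, f z) = b := by
      rw [iSup, hrange, csSup_Ioo hab]
    rwa [h2] at h1
  refine ⟨f, ⟨fun z => Set.Ioo_subset_Icc_self (hmem z), hfC1, hfderiv, hf0⟩,
    hfmono, tendf_bot, tendf_top, ?_⟩
  -- uniqueness
  intro g hgmem hgC1 hgderiv hg0
  funext z
  have h0mem : (0:ℝ) ∈ Set.Ioo (-(|z|+1)) (|z|+1) := by
    constructor <;> [skip; skip] <;> nlinarith [abs_nonneg z]
  have key := ODE_solution_unique_of_mem_Icc (v := fun _ x => B x)
    (s := fun _ => Set.Icc a b) (K := K) (fun _ _ => hL) h0mem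
    (hgC1.continuous.continuousOn)
    (fun t _ => hgderiv t) (fun t _ => hgmem t)
    (hfcont.continuousOn)
    (fun t _ => hfderiv t) (fun t _ => Set.Ioo_subset_Icc_self (hmem t))
    (hg0.trans hf0.symm)
  exact key ⟨by nlinarith [neg_abs_le z, abs_nonneg z], by nlinarith [le_abs_self z]⟩
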